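/- If p* ∈ Δ minimizes J on Δ and all coordinates of p* are positive, then there exist constants C > 0 and ρ > 0 such that p*_i = C e^{-β E_i} ρ^i for all i = 0,…,D. -/

import Mathlib

open Real Finset

/-- If p* ∈ Δ minimizes J on Δ and has all coordinates positive,
then there exist C > 0 and ρ > 0 with p*_i = C e^{-βE_i} ρ^i for all i. -/
theorem minimizer_has_exponential_form
    (D : ℕ) (hD : 2 ≤ D) (E : Fin (D + 1) → ℝ) (β : ℝ)
    (Δ : Set (Fin (D + 1) → ℝ))
    (hΔ : Δ = {p : Fin (D + 1) → ℝ | (∀ i, p i ∈ Set.Icc (0 : ℝ) 1) ∧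
        (∑ i, p i = 1) ∧ (∑ i, (i.1 : ℝ) * p i = 1)})
    (J : (Fin (D + 1) → ℝ) → ℝ)
    (hJ : J = fun p => (∑ i, p i * Real.log (p i)) + β * ∑ i, p i * E i)
    (pstar : Fin (D + 1) → ℝ)
    (hmem : pstar ∈ Δ) (hmin : IsMinOn J Δ pstar)
    (hpos : ∀ i, 0 < pstar i) :
    ∃ C > (0 : ℝ), ∃ ρ > (0 : ℝ), ∀ i : Fin (D + 1),
      pstar i = C * Real.exp (-β * E i) * ρ ^ (i.1 : ℕ) := by
  subst hΔ hJ
  have hsum1 : (∑ j, pstar j) = 1 := hmem.2.1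
  have hsum2 : (∑ j, (j.1 : ℝ) * pstar j) = 1 := hmem.2.2
  have hone : ∀ i, pstar i < 1 := by
    intro i
    obtain ⟨j, hj⟩ : ∃ j : Fin (D + 1), j ≠ i := by
      refine ⟨⟨if i.1 = 0 then 1 else 0, by split <;> omega⟩, ?_⟩
      intro h
      have := congrArg Fin.val h
      dsimp only at this
      split at this <;> omega
    have hlt : pstar i < ∑ j, pstar j :=
      Finset.single_lt_sum hj (Finset.mem_univ i) (Finset.mem_univ j) (hpos j)
        (fun k _ _ => (hpos k).le)
    linarith [hsum1 ▸ hlt]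
  -- Key first-order condition
  have key : ∀ v : Fin (D + 1) → ℝ, (∑ j, v j) = 0 → (∑ j, (j.1 : ℝ) * v j) = 0 →
      (∑ j, v j * (Real.log (pstar j) + β * E j)) = 0 := by
    intro v hs hw
    set f : ℝ → ℝ := fun t => (∑ j, (pstar j + t * v j) * Real.log (pstar j + t * v j))
        + β * ∑ j, (pstar j + t * v j) * E j with hf
    have hline : ∀ j : Fin (D + 1), HasDerivAt (fun t : ℝ => pstar j + t * v j) (v j) 0 := by
      intro j
      simpa using ((hasDerivAt_id (0 : ℝ)).mul_const (v j)).const_add (pstar j)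
    have hderiv : HasDerivAt f ((∑ j, (Real.log (pstar j) + 1) * v j)
        + β * ∑ j, v j * E j) 0 := by
      apply HasDerivAt.add
      · apply HasDerivAt.fun_sum
        intro j _
        have hmul : HasDerivAt (fun x : ℝ => x * Real.log x)
            (Real.log (pstar j + 0 * v j) + 1) (pstar j + 0 * v j) := by
          exact Real.hasDerivAt_mul_log (by simpa using (hpos j).ne')
        have := hmul.comp 0 (hline j)
        simpa [Function.comp_def] using this
      · apply HasDerivAt.const_mul
        apply HasDerivAt.fun_sum
        intro j _
        exact (hline j).mul_const (E j)
    have hEv : ∀ᶠ t in nhds (0 : ℝ), ∀ j, pstar j + t * v j ∈ Set.Ioo (0 : ℝ) 1 := by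
      rw [Filter.eventually_all]
      intro j
      have hc : Continuous fun t : ℝ => pstar j + t * v j := by continuity
      have hm : Set.Ioo (0 : ℝ) 1 ∈ nhds (pstar j + 0 * v j) := by
        rw [zero_mul, add_zero]
        exact isOpen_Ioo.mem_nhds ⟨hpos j, hone j⟩
      exact hc.continuousAt.preimage_mem_nhds hm
    have hloc : IsLocalMin f 0 := by
      filter_upwards [hEv] with t ht
      have hmemt : (fun j => pstar j + t * v j) ∈
          {p : Fin (D + 1) → ℝ | (∀ i, p i ∈ Set.Icc (0 : ℝ) 1) ∧
            (∑ i, p i = 1) ∧ (∑ i, (i.1 : ℝ) * p i = 1)} := by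
        refine ⟨fun j => ⟨(ht j).1.le, (ht j).2.le⟩, ?_, ?_⟩
        · rw [Finset.sum_add_distrib, ← Finset.mul_sum, hs, hsum1, mul_zero, add_zero]
        · have : ∀ j : Fin (D + 1), (j.1 : ℝ) * (pstar j + t * v j)
              = (j.1 : ℝ) * pstar j + t * ((j.1 : ℝ) * v j) := fun j => by ring
          rw [Finset.sum_congr rfl fun j _ => this j, Finset.sum_add_distrib,
            ← Finset.mul_sum, hw, hsum2, mul_zero, add_zero]
      have hle := isMinOn_iff.mp hmin _ hmemt
      simpa [hf] using hle
    have hzero := hloc.hasDerivAt_eq_zero hderiv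
    have expand : ∑ j, v j * (Real.log (pstar j) + β * E j) =
        ((∑ j, (Real.log (pstar j) + 1) * v j) + β * ∑ j, v j * E j) - ∑ j, v j := by
      rw [Finset.mul_sum, ← Finset.sum_add_distrib, ← Finset.sum_sub_distrib]
      exact Finset.sum_congr rfl fun j _ => by ring
    rw [expand, hzero, hs, sub_zero]
  set g : Fin (D + 1) → ℝ := fun i => Real.log (pstar i) + β * E i with hg
  have h1v : ((1 : Fin (D + 1)) : ℕ) = 1 := by
    rw [Fin.val_one', Nat.mod_eq_of_lt (by omega)]
  have h0v : ((0 : Fin (D + 1)) : ℕ) = 0 := rfl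
  have hlin : ∀ i : Fin (D + 1), g i = g 0 + (i.1 : ℝ) * (g 1 - g 0) := by
    intro i
    have h := key (fun j => ((i.1 : ℝ) - 1) * (if j = 0 then 1 else 0)
        - (i.1 : ℝ) * (if j = 1 then 1 else 0) + (if j = i then 1 else 0)) ?_ ?_
    · have hexp : ∑ j, (((i.1 : ℝ) - 1) * (if j = 0 then 1 else 0)
          - (i.1 : ℝ) * (if j = 1 then 1 else 0) + (if j = i then 1 else 0)) * g j
          = ((i.1 : ℝ) - 1) * g 0 - (i.1 : ℝ) * g 1 + g i := by
        have : ∀ j : Fin (D + 1), (((i.1 : ℝ) - 1) * (if j = 0 then 1 else 0)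
            - (i.1 : ℝ) * (if j = 1 then 1 else 0) + (if j = i then 1 else 0)) * g j
            = ((i.1 : ℝ) - 1) * (if j = 0 then g j else 0)
              - (i.1 : ℝ) * (if j = 1 then g j else 0) + (if j = i then g j else 0) := by
          intro j; split <;> split <;> split <;> ring
        rw [Finset.sum_congr rfl fun j _ => this j, Finset.sum_add_distrib,
          Finset.sum_sub_distrib, ← Finset.mul_sum, ← Finset.mul_sum,
          Finset.sum_ite_eq' univ (0 : Fin (D + 1)) g,
          Finset.sum_ite_eq' univ (1 : Fin (D + 1)) g,
          Finset.sum_ite_eq' univ i g]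
        simp
      rw [hexp] at h
      linarith
    · have : ∀ j : Fin (D + 1), (((i.1 : ℝ) - 1) * (if j = 0 then 1 else 0)
          - (i.1 : ℝ) * (if j = 1 then 1 else 0) + (if j = i then 1 else 0))
          = ((i.1 : ℝ) - 1) * (if j = 0 then (1:ℝ) else 0)
            - (i.1 : ℝ) * (if j = 1 then (1:ℝ) else 0) + (if j = i then (1:ℝ) else 0) :=
        fun j => rfl
      rw [Finset.sum_add_distrib, Finset.sum_sub_distrib, ← Finset.mul_sum, ← Finset.mul_sum]
      simp [Finset.sum_ite_eq' univ]
    · have : ∀ j : Fin (D + 1), (j.1 : ℝ) * (((i.1 : ℝ) - 1) * (if j = 0 then 1 else 0)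
          - (i.1 : ℝ) * (if j = 1 then 1 else 0) + (if j = i then 1 else 0))
          = ((i.1 : ℝ) - 1) * (if j = 0 then (j.1 : ℝ) else 0)
            - (i.1 : ℝ) * (if j = 1 then (j.1 : ℝ) else 0)
            + (if j = i then (j.1 : ℝ) else 0) := by
        intro j; split <;> split <;> split <;> ring
      rw [Finset.sum_congr rfl fun j _ => this j, Finset.sum_add_distrib,
        Finset.sum_sub_distrib, ← Finset.mul_sum, ← Finset.mul_sum,
        Finset.sum_ite_eq' univ (0 : Fin (D + 1)) (fun j => (j.1 : ℝ)),
        Finset.sum_ite_eq' univ (1 : Fin (D + 1)) (fun j => (j.1 : ℝ)),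
        Finset.sum_ite_eq' univ i (fun j => (j.1 : ℝ))]
      simp only [Finset.mem_univ, if_true, h1v, h0v]
      push_cast
      ring
  refine ⟨Real.exp (g 0), Real.exp_pos _, Real.exp (g 1 - g 0), Real.exp_pos _, fun i => ?_⟩
  have hpi : pstar i = Real.exp (g i - β * E i) := by
    have : g i - β * E i = Real.log (pstar i) := by rw [hg]; ring
    rw [this, Real.exp_log (hpos i)]
  rw [hpi, hlin i, ← Real.exp_nat_mul, ← Real.exp_add, ← Real.exp_add]
  congr 1
  ring
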